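/- arXiv:2112.02866 — 4 statements merged into one kernel-verified Lean document; each statement's English description precedes it below -/
import Mathlib

section
/- Let K ≥ 1, w ∈ ℝ^K, and η > 0. Then there exists a unique real number λ with λ < min_{i∈[K]} w(i) such that ∑_{i=1}^{K} η²/(w(i) - λ)² = 1. -/
theorem lagrange_multiplier_exists_unique
    (K : ℕ) (hK : 1 ≤ K) (w : Fin K → ℝ) (η : ℝ) (hη : 0 < η) :
    ∃! l : ℝ,
      l < Finset.univ.inf'
            (Finset.univ_nonempty_iff.mpr (Fin.pos_iff_nonempty.mp hK)) w
      ∧ ∑ i : Fin K, η ^ 2 / (w i - l) ^ 2 = 1 := by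
  have hne : (Finset.univ : Finset (Fin K)).Nonempty :=
    Finset.univ_nonempty_iff.mpr (Fin.pos_iff_nonempty.mp hK)
  set m := Finset.univ.inf' hne w with hmdef
  have hmle : ∀ i, m ≤ w i := fun i => Finset.inf'_le _ (Finset.mem_univ i)
  set f : ℝ → ℝ := fun l => ∑ i : Fin K, η ^ 2 / (w i - l) ^ 2 with hfdef
  have hK1 : (1 : ℝ) ≤ (K : ℝ) := by exact_mod_cast hK
  -- strict monotonicity on Iio m
  have hmono : ∀ x y : ℝ, x < y → y < m → f x < f y := by
    intro x y hxy hym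
    apply Finset.sum_lt_sum_of_nonempty hne
    intro i _
    have h1 : 0 < w i - y := by linarith [hmle i]
    have h2 : w i - y < w i - x := by linarith
    have hsq : (w i - y) ^ 2 < (w i - x) ^ 2 := by nlinarith
    exact div_lt_div_of_pos_left (by positivity) (by positivity) hsq
  set a : ℝ := m - η * (K + 1) with hadef
  set b : ℝ := m - η / 2 with hbdef
  have hab : a ≤ b := by
    simp only [hadef, hbdef]
    nlinarith
  have hbm : b < m := by simp only [hbdef]; linarith
  have ham : a < m := lt_of_le_of_lt hab hbm
  -- f a ≤ 1
  have hfa : f a ≤ 1 := by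
    have hbound : ∀ i : Fin K, η ^ 2 / (w i - a) ^ 2 ≤ 1 / (K + 1) ^ 2 := by
      intro i
      have h1 : η * (K + 1) ≤ w i - a := by
        have := hmle i; simp only [hadef]; linarith
      have h2 : 0 < η * (K + 1) := by positivity
      have hsq : (η * (K + 1)) ^ 2 ≤ (w i - a) ^ 2 := by nlinarith
      calc η ^ 2 / (w i - a) ^ 2 ≤ η ^ 2 / (η * (K + 1)) ^ 2 :=
            div_le_div_of_nonneg_left (by positivity) (by positivity) hsq
        _ = 1 / (K + 1) ^ 2 := by field_simp
    calc f a ≤ ∑ _i : Fin K, 1 / ((K : ℝ) + 1) ^ 2 := Finset.sum_le_sum (fun i _ => hbound i)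
      _ = K / (K + 1) ^ 2 := by simp [Finset.sum_const]; ring
      _ ≤ 1 := by
          rw [div_le_one (by positivity)]
          nlinarith
  -- f b ≥ 1
  have hfb : 1 ≤ f b := by
    obtain ⟨j, _, hj⟩ := Finset.exists_mem_eq_inf' hne w
    have hterm : η ^ 2 / (w j - b) ^ 2 = 4 := by
      have : w j - b = η / 2 := by simp only [hbdef]; rw [← hj]; ring
      rw [this]
      field_simp
      ring
    have hle : η ^ 2 / (w j - b) ^ 2 ≤ f b := by
      apply Finset.single_le_sum (f := fun i => η ^ 2 / (w i - b) ^ 2)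
        (fun i _ => by positivity) (Finset.mem_univ j)
    linarith
  -- continuity on Icc a b
  have hcont : ContinuousOn f (Set.Icc a b) := by
    apply continuousOn_finset_sum
    intro i _
    apply ContinuousOn.div continuousOn_const
    · exact ((continuous_const.sub continuous_id).pow 2).continuousOn
    · intro x hx
      have : x < m := lt_of_le_of_lt hx.2 hbm
      have : 0 < w i - x := by linarith [hmle i]
      positivity
  obtain ⟨c, hc, hfc⟩ := intermediate_value_Icc hab hcont ⟨hfa, hfb⟩
  have hcm : c < m := lt_of_le_of_lt hc.2 hbm
  refine ⟨c, ⟨hcm, hfc⟩, ?_⟩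
  rintro y ⟨hym, hfy⟩
  have hfy' : f y = 1 := hfy
  rcases lt_trichotomy y c with h | h | h
  · exact absurd (hmono y c h hcm) (by rw [hfy', hfc]; exact lt_irrefl 1)
  · exact h
  · exact absurd (hmono c y h hym) (by rw [hfy', hfc]; exact lt_irrefl 1)
end

section
/- Let K ≥ 1, w ∈ ℝ^K, η > 0, and let λ < min_i w(i) satisfy ∑_{i=1}^{K} η²/(w(i)-λ)² = 1. Define q(i) := η²/(w(i)-λ)² for each i. Then q lies in the probability simplex Δ_K (i.e., q(i) > 0 for all i and ∑_i q(i) = 1), and q is the unique global minimizer over Δ_K of the function F(p) = ∑_{i=1}^{K} w(i)·p(i) - 2η·∑_{i=1}^{K} √(p(i)). -/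
theorem tsallis_ftrl_minimizer
    (K : ℕ) (hK : 1 ≤ K) (w : Fin K → ℝ) (η : ℝ) (hη : 0 < η)
    (l : ℝ)
    (hl : l < Finset.univ.inf'
            (Finset.univ_nonempty_iff.mpr (Fin.pos_iff_nonempty.mp hK)) w)
    (hnorm : ∑ i : Fin K, η ^ 2 / (w i - l) ^ 2 = 1)
    (q : Fin K → ℝ) (hq : ∀ i, q i = η ^ 2 / (w i - l) ^ 2) :
    (∀ i, 0 < q i) ∧ (∑ i, q i = 1) ∧
      (∀ p : Fin K → ℝ, (∀ i, 0 ≤ p i) → (∑ i, p i = 1) → p ≠ q →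
        (∑ i, w i * q i) - 2 * η * ∑ i, Real.sqrt (q i)
          < (∑ i, w i * p i) - 2 * η * ∑ i, Real.sqrt (p i)) := by
  have ha : ∀ i, 0 < w i - l := by
    intro i
    have h : Finset.univ.inf'
        (Finset.univ_nonempty_iff.mpr (Fin.pos_iff_nonempty.mp hK)) w ≤ w i :=
      Finset.inf'_le w (Finset.mem_univ i)
    linarith
  have hqpos : ∀ i, 0 < q i := by
    intro i; rw [hq i]
    exact div_pos (pow_pos hη 2) (pow_pos (ha i) 2)
  have hsum : ∑ i, q i = 1 := by
    rw [Finset.sum_congr rfl fun i _ => hq i]; exact hnorm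
  refine ⟨hqpos, hsum, ?_⟩
  intro p hp hps hne
  have hsq : ∀ i, Real.sqrt (q i) = η / (w i - l) := by
    intro i
    rw [hq i, ← div_pow]
    exact Real.sqrt_sq (le_of_lt (div_pos hη (ha i)))
  set g : Fin K → ℝ := fun i => (w i - l) * (Real.sqrt (p i) - η / (w i - l)) ^ 2 with hg
  have key : ∀ i, (w i * p i - 2 * η * Real.sqrt (p i))
      - (w i * q i - 2 * η * Real.sqrt (q i)) + l * (q i - p i) = g i := by
    intro i
    have h3 : (w i - l) ≠ 0 := ne_of_gt (ha i)
    set s := Real.sqrt (p i) with hs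
    have h1 : s ^ 2 = p i := Real.sq_sqrt (hp i)
    rw [hsq i, hq i, hg, ← h1]
    field_simp
    ring
  have e1 : ∑ i, ((w i * p i - 2 * η * Real.sqrt (p i))
        - (w i * q i - 2 * η * Real.sqrt (q i)) + l * (q i - p i))
      = ((∑ i, w i * p i) - 2 * η * ∑ i, Real.sqrt (p i))
        - ((∑ i, w i * q i) - 2 * η * ∑ i, Real.sqrt (q i))
        + l * ((∑ i, q i) - ∑ i, p i) := by
    simp [Finset.sum_add_distrib, Finset.sum_sub_distrib, Finset.mul_sum, mul_sub]
  have hdiff : ∑ i, g i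
      = ((∑ i, w i * p i) - 2 * η * ∑ i, Real.sqrt (p i))
        - ((∑ i, w i * q i) - 2 * η * ∑ i, Real.sqrt (q i)) := by
    rw [← Finset.sum_congr rfl fun i _ => key i, e1, hsum, hps]
    ring
  have hpos : 0 < ∑ i, g i := by
    obtain ⟨i, hi⟩ : ∃ i, p i ≠ q i := by
      by_contra h
      push_neg at h
      exact hne (funext h)
    refine Finset.sum_pos' (fun j _ => ?_) ⟨i, Finset.mem_univ i, ?_⟩
    · exact mul_nonneg (le_of_lt (ha j)) (sq_nonneg _)
    · apply mul_pos (ha i)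
      have hne0 : Real.sqrt (p i) - η / (w i - l) ≠ 0 := by
        intro h
        apply hi
        have hs : Real.sqrt (p i) = η / (w i - l) := by linarith
        have h2 := Real.sq_sqrt (hp i)
        rw [hs, div_pow] at h2
        rw [← h2, hq i]
      positivity
  linarith
end

section
/- Let K ≥ 1, η > 0, and for each u ∈ ℝ^K let λ(u) denote the unique real number with λ(u) < min_i u(i) and ∑_{i=1}^{K} η²/(u(i)-λ(u))² = 1. Then λ is monotone: for every u ∈ ℝ^K, every j ∈ [K], and every δ > 0, λ(u + δ·e_j) ≥ λ(u), where e_j is the j-th standard basis vector. -/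
theorem lagrange_multiplier_monotone
    (K : ℕ) (hK : 1 ≤ K) (η : ℝ) (hη : 0 < η)
    (lam : (Fin K → ℝ) → ℝ)
    (hlam : ∀ u : Fin K → ℝ,
      lam u < Finset.univ.inf'
          (Finset.univ_nonempty_iff.mpr (Fin.pos_iff_nonempty.mp hK)) u
      ∧ ∑ i : Fin K, η ^ 2 / (u i - lam u) ^ 2 = 1) :
    ∀ (u : Fin K → ℝ) (j : Fin K) (δ : ℝ), 0 < δ →
      lam u ≤ lam (u + Pi.single j δ) := by
  intro u j δ hδ
  by_contra h
  push_neg at h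
  set v := u + Pi.single j δ with hv
  obtain ⟨hu1, hu2⟩ := hlam u
  obtain ⟨hv1, hv2⟩ := hlam v
  have hne : (Finset.univ : Finset (Fin K)).Nonempty :=
    Finset.univ_nonempty_iff.mpr (Fin.pos_iff_nonempty.mp hK)
  have key : ∀ i ∈ Finset.univ, η ^ 2 / (v i - lam v) ^ 2 < η ^ 2 / (u i - lam u) ^ 2 := by
    intro i _
    have h1 : lam u < u i := lt_of_lt_of_le hu1 (Finset.inf'_le _ (Finset.mem_univ i))
    have h2 : u i ≤ v i := by
      have : (0:ℝ) ≤ (Pi.single j δ : Fin K → ℝ) i := by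
        rcases eq_or_ne i j with rfl | hne
        · simp; linarith
        · simp [Pi.single_eq_of_ne hne]
      simp only [hv, Pi.add_apply]
      linarith
    have h3 : u i - lam u < v i - lam v := by linarith
    have hsq : (u i - lam u) ^ 2 < (v i - lam v) ^ 2 :=
      pow_lt_pow_left₀ h3 (by linarith) (by norm_num)
    exact div_lt_div_of_pos_left (pow_pos hη 2) (pow_pos (by linarith : (0:ℝ) < u i - lam u) 2) hsq
  have := Finset.sum_lt_sum_of_nonempty hne key
  rw [hu2, hv2] at this
  exact lt_irrefl 1 this
end

section
/- Let K ≥ 1, η > 0, and for u ∈ ℝ^K let λ(u) be the unique real with λ(u) < min_i u(i) and ∑_{i=1}^{K} η²/(u(i)-λ(u))² = 1. Let w ∈ ℝ^K satisfy w(1) ≤ w(2) ≤ ... ≤ w(K). Then for every δ > 0 and j ∈ [K], λ(w + δ·e_j) - λ(w) ≤ δ/j. -/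
theorem diff_aux (η a b c : ℝ) (hη : 0 < η) (hac : 0 < a - c) (hab : a ≤ b) (hc : 0 < c) :
    η^2/(b-c)^2 - η^2/b^2 ≤ η^2/(a-c)^2 - η^2/a^2 := by
  have hg := convexOn_zpow (𝕜 := ℝ) (-2)
  have ha : 0 < a := by linarith
  have hb : 0 < b := by linarith
  have hbc : 0 < b - c := by linarith
  set g : ℝ → ℝ := fun x : ℝ => x ^ (-2:ℤ) with hgdef
  have key : g a - g (a-c) ≤ g b - g (b-c) := by
    rcases eq_or_lt_of_le hab with rfl | hab
    · exact le_refl _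
    have h1 := hg.secant_mono (a := a-c) (x := a) (y := b)
      (Set.mem_Ioi.mpr hac) (Set.mem_Ioi.mpr ha) (Set.mem_Ioi.mpr hb)
      (by intro h; linarith) (by intro h; linarith) hab.le
    have h2 := hg.secant_mono (a := b) (x := a-c) (y := b-c)
      (Set.mem_Ioi.mpr hb) (Set.mem_Ioi.mpr hac) (Set.mem_Ioi.mpr hbc)
      (by intro h; linarith) (by intro h; linarith) (by linarith)
    have e1 : a - (a - c) = c := by ring
    have e2 : (g (a-c) - g b)/((a-c) - b) = (g b - g (a-c))/(b - (a-c)) := by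
      rw [← neg_div_neg_eq]; ring_nf
    have e3 : (b - c) - b = -c := by ring
    rw [e1] at h1
    rw [e2, e3] at h2
    have h3 : (g a - g (a-c))/c ≤ (g (b-c) - g b)/(-c) := le_trans h1 h2
    have e4 : (g (b-c) - g b)/(-c) = (g b - g (b-c))/c := by
      rw [← neg_div_neg_eq]; ring_nf
    rw [e4] at h3
    have h5 := (div_le_div_iff₀ hc hc).mp h3
    nlinarith
  have gv : ∀ x : ℝ, x ≠ 0 → g x = 1/x^2 := by
    intro x hx; simp [hgdef, zpow_neg]
  rw [gv a ha.ne', gv b hb.ne', gv (a-c) hac.ne', gv (b-c) hbc.ne'] at key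
  have h4 := mul_le_mul_of_nonneg_left key (le_of_lt (pow_pos hη 2))
  rw [mul_sub, mul_sub, mul_one_div, mul_one_div, mul_one_div, mul_one_div] at h4
  linarith [h4]

theorem conv_aux (η : ℝ) (hη : 0 < η) (m : ℕ) (b c : ℝ) (hbc : 0 < b - c) (hc : 0 < c) :
    ((m:ℝ)+1) * (η^2/b^2) ≤ (m:ℝ) * (η^2/(b-c)^2) + η^2/(b + m*c)^2 := by
  have hg := convexOn_zpow (𝕜 := ℝ) (-2)
  have hb : 0 < b := by linarith
  have hm1 : (0:ℝ) < (m:ℝ) + 1 := by positivity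
  have hbmc : 0 < b + m*c := by positivity
  have gv : ∀ x : ℝ, x ≠ 0 → x ^ (-2:ℤ) = 1/x^2 := by
    intro x hx; simp [zpow_neg]
  have hcomb : ((m:ℝ)/((m:ℝ)+1)) • (b - c) + ((1:ℝ)/((m:ℝ)+1)) • (b + m*c) = b := by
    simp only [smul_eq_mul]; field_simp; ring
  have h := hg.2 (Set.mem_Ioi.mpr hbc) (Set.mem_Ioi.mpr hbmc)
    (by positivity : (0:ℝ) ≤ (m:ℝ)/((m:ℝ)+1)) (by positivity : (0:ℝ) ≤ (1:ℝ)/((m:ℝ)+1))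
    (by field_simp)
  rw [hcomb] at h
  simp only [smul_eq_mul] at h
  rw [gv b hb.ne', gv (b-c) hbc.ne', gv (b + m*c) hbmc.ne'] at h
  have h2 := mul_le_mul_of_nonneg_left h hm1.le
  calc ((m:ℝ)+1) * (η^2/b^2) = η^2 * (((m:ℝ)+1) * (1/b^2)) := by ring
    _ ≤ η^2 * (((m:ℝ)+1) * ((m:ℝ)/((m:ℝ)+1) * (1/(b-c)^2) + 1/((m:ℝ)+1) * (1/(b+m*c)^2))) := by
        nlinarith [pow_pos hη 2]
    _ = (m:ℝ) * (η^2/(b-c)^2) + η^2/(b + m*c)^2 := by field_simp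

theorem lagrange_multiplier_lipschitz
    (K : ℕ) (hK : 1 ≤ K) (η : ℝ) (hη : 0 < η)
    (lam : (Fin K → ℝ) → ℝ)
    (hlam : ∀ u : Fin K → ℝ,
      lam u < Finset.univ.inf'
          (Finset.univ_nonempty_iff.mpr (Fin.pos_iff_nonempty.mp hK)) u
      ∧ ∑ i : Fin K, η ^ 2 / (u i - lam u) ^ 2 = 1)
    (w : Fin K → ℝ) (hw : ∀ i j : Fin K, i ≤ j → w i ≤ w j) :
    ∀ (δ : ℝ) (j : Fin K), 0 < δ →
      lam (w + Pi.single j δ) - lam w ≤ δ / ((j : ℕ) + 1) := by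
  intro δ j hδ
  obtain ⟨hLw, hsumw⟩ := hlam w
  set u' : Fin K → ℝ := w + Pi.single j δ with hu'def
  obtain ⟨hLu, hsumu'⟩ := hlam u'
  set m : ℕ := (j : ℕ) with hmdef
  set c : ℝ := δ / ((m:ℝ)+1) with hcdef
  have hm1 : (0:ℝ) < (m:ℝ)+1 := by positivity
  have hc : 0 < c := by positivity
  have hδc : δ = ((m:ℝ)+1) * c := by rw [hcdef]; field_simp
  have hu'app : ∀ i, u' i = w i + if i = j then δ else 0 := by
    intro i; simp [hu'def, Pi.single_apply]
  set lw : ℝ := lam w with hlwdef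
  set lu : ℝ := lam u' with hludef
  show lu - lw ≤ c
  have hlow : ∀ i, lu < u' i := fun i =>
    lt_of_lt_of_le hLu (Finset.inf'_le _ (Finset.mem_univ i))
  have hloww : ∀ i, lw < w i := fun i =>
    lt_of_lt_of_le hLw (Finset.inf'_le _ (Finset.mem_univ i))
  by_cases hcase : Finset.univ.inf'
      (Finset.univ_nonempty_iff.mpr (Fin.pos_iff_nonempty.mp hK)) u' ≤ lw + c
  · linarith [hLu]
  · push_neg at hcase
    have hlow2 : ∀ i, lw + c < u' i := fun i =>
      lt_of_lt_of_le hcase (Finset.inf'_le _ (Finset.mem_univ i))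
    have hlow2' : ∀ i : Fin K, i ≠ j → 0 < (w i - lw) - c := by
      intro i hij
      have := hlow2 i
      rw [hu'app i, if_neg hij] at this
      linarith
    -- key inequality
    have hS : (1:ℝ) ≤ ∑ i, η^2/(u' i - (lw + c))^2 := by
      rw [← hsumw]
      set D : ℝ := η^2/((w j - lw) - c)^2 - η^2/(w j - lw)^2 with hDdef
      set Fj : ℝ := η^2/((w j - lw) + (m:ℝ)*c)^2 - η^2/(w j - lw)^2 with hFjdef
      set G : Fin K → ℝ := fun i => if i < j then D else if i = j then Fj else 0 with hGdef
      have hpoint : ∀ i, G i + η^2/(w i - lw)^2 ≤ η^2/(u' i - (lw + c))^2 := by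
        intro i
        rcases lt_trichotomy i j with h | h | h
        · have hij : i ≠ j := ne_of_lt h
          have e : u' i - (lw + c) = (w i - lw) - c := by
            rw [hu'app i, if_neg hij]; ring
          rw [e]
          have hGi : G i = D := if_pos h
          rw [hGi, hDdef]
          have hd := diff_aux η (w i - lw) (w j - lw) c hη (hlow2' i hij)
            (by have := hw i j h.le; linarith) hc
          linarith
        · subst h
          have e : u' i - (lw + c) = (w i - lw) + (m:ℝ)*c := by
            rw [hu'app i, if_pos rfl, hδc]; ring
          rw [e]
          have hGi : G i = Fj := by
            rw [hGdef]; simp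
          rw [hGi, hFjdef]
          linarith
        · have hij : i ≠ j := (ne_of_lt h).symm
          have e : u' i - (lw + c) = (w i - lw) - c := by
            rw [hu'app i, if_neg hij]; ring
          rw [e]
          have hGi : G i = 0 := by
            rw [hGdef]; simp [not_lt_of_gt h, hij]
          rw [hGi, zero_add]
          have h1 : 0 < (w i - lw) - c := hlow2' i hij
          have h2 : ((w i - lw) - c)^2 ≤ (w i - lw)^2 := by nlinarith
          have h3 : (0:ℝ) < ((w i - lw) - c)^2 := by positivity
          exact div_le_div_of_nonneg_left (sq_nonneg η) h3 h2
      have hsumG : ∑ i, G i = (m:ℝ) * D + Fj := by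
        rw [← Finset.sum_filter_add_sum_filter_not Finset.univ (· < j) G]
        have h1 : ∑ i ∈ Finset.univ.filter (· < j), G i = (m:ℝ) * D := by
          rw [Finset.sum_congr rfl (fun i hi => ?_)]
          · rw [Finset.sum_const, nsmul_eq_mul]
            congr 1
            norm_cast
            have : Finset.univ.filter (· < j) = Finset.Iio j := by
              ext i; simp
            rw [this, Fin.card_Iio]
          · exact if_pos (Finset.mem_filter.mp hi).2
        have h2 : ∑ i ∈ Finset.univ.filter (fun i => ¬ i < j), G i = Fj := by
          rw [Finset.sum_congr rfl (fun i hi => ?_), Finset.sum_ite_eq' _ j (fun _ => Fj)]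
          · simp
          · rw [hGdef]
            simp only
            rw [if_neg (Finset.mem_filter.mp hi).2]
        rw [h1, h2]
      have hGnonneg : 0 ≤ ∑ i, G i := by
        rw [hsumG]
        rcases Nat.eq_zero_or_pos m with hm | hm
        · rw [hFjdef, hm]
          norm_num
        · have hi0 : (⟨0, by omega⟩ : Fin K) ≠ j := by
            intro h
            rw [hmdef] at hm
            rw [← h] at hm
            simp at hm
          have hbc : 0 < (w j - lw) - c := by
            have h1 := hlow2' ⟨0, by omega⟩ hi0
            have h2 := hw ⟨0, by omega⟩ j (by simp [Fin.le_def])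
            linarith
          have := conv_aux η hη m (w j - lw) c hbc hc
          rw [hDdef, hFjdef]
          linarith
      calc ∑ i, η^2/(w i - lw)^2 ≤ ∑ i, (G i + η^2/(w i - lw)^2) := by
            rw [Finset.sum_add_distrib]; linarith
        _ ≤ ∑ i, η^2/(u' i - (lw + c))^2 := Finset.sum_le_sum (fun i _ => hpoint i)
    by_contra hcon
    push_neg at hcon
    have hlt : ∑ i, η^2/(u' i - (lw+c))^2 < ∑ i, η^2/(u' i - lu)^2 := by
      apply Finset.sum_lt_sum_of_nonempty
      · exact Finset.univ_nonempty_iff.mpr (Fin.pos_iff_nonempty.mp hK)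
      · intro i _
        have h1 : 0 < u' i - lu := by linarith [hlow i]
        have h2 : u' i - lu < u' i - (lw + c) := by linarith
        exact div_lt_div_of_pos_left (by positivity) (by positivity) (by nlinarith)
    rw [hsumu'] at hlt
    linarith
end
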